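/- Let K be a convex subset of ℝⁿ. The function x ↦ dist(x, ℝⁿ \ K) is concave on K. -/

import Mathlib

lemma mem_of_dist_lt_infDist_compl {E : Type*} [NormedAddCommGroup E]
    {s : Set E} {x w : E} (h : dist w x < Metric.infDist x sᶜ) : w ∈ s := by
  by_contra hw
  exact absurd (Metric.infDist_le_dist_of_mem (s := sᶜ) hw)
    (not_le.2 (by rwa [dist_comm] at h))

/-- The distance to the complement of a convex set is concave on the set. -/
theorem concaveOn_infDist_compl (n : ℕ)
    (K : Set (EuclideanSpace ℝ (Fin n))) (hconv : Convex ℝ K) :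
    ConcaveOn ℝ K (fun x => Metric.infDist x Kᶜ) := by
  rcases Set.eq_empty_or_nonempty Kᶜ with hKc | hKc
  · simp only [hKc, Metric.infDist_empty]
    exact concaveOn_const 0 hconv
  refine ⟨hconv, fun x hx y hy a b ha hb hab => ?_⟩
  set fx := Metric.infDist x Kᶜ
  set fy := Metric.infDist y Kᶜ
  simp only []
  by_contra hlt
  push_neg at hlt
  obtain ⟨z, hz, hlt⟩ := (Metric.infDist_lt_iff hKc).1 hlt
  set L : ℝ := a • fx + b • fy with hL
  have hL0 : 0 < L := lt_of_le_of_lt dist_nonneg hlt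
  set v : EuclideanSpace ℝ (Fin n) := z - (a • x + b • y) with hv
  have hvn : ‖v‖ < L := by rw [hv, ← dist_eq_norm, dist_comm]; exact hlt
  set vx := (fx / L) • v
  set vy := (fy / L) • v
  have hxK : x + vx ∈ K := by
    rcases eq_or_lt_of_le (Metric.infDist_nonneg (x := x) (s := Kᶜ)) with h0 | h0
    · have hfx : fx = 0 := h0.symm
      simp [vx, hfx, hx]
    · refine mem_of_dist_lt_infDist_compl (x := x) ?_
      rw [dist_eq_norm, add_sub_cancel_left]
      calc ‖vx‖ = (fx / L) * ‖v‖ := by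
            rw [norm_smul, Real.norm_eq_abs, abs_of_nonneg (by positivity)]
        _ < (fx / L) * L := by
            apply mul_lt_mul_of_pos_left hvn (by positivity)
        _ = fx := by field_simp
  have hyK : y + vy ∈ K := by
    rcases eq_or_lt_of_le (Metric.infDist_nonneg (x := y) (s := Kᶜ)) with h0 | h0
    · have hfy : fy = 0 := h0.symm
      simp [vy, hfy, hy]
    · refine mem_of_dist_lt_infDist_compl (x := y) ?_
      rw [dist_eq_norm, add_sub_cancel_left]
      calc ‖vy‖ = (fy / L) * ‖v‖ := by
            rw [norm_smul, Real.norm_eq_abs, abs_of_nonneg (by positivity)]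
        _ < (fy / L) * L := by
            apply mul_lt_mul_of_pos_left hvn (by positivity)
        _ = fy := by field_simp
  have hzK : z ∈ K := by
    have h1 : a * (fx / L) + b * (fy / L) = 1 := by
      rw [mul_div_assoc', mul_div_assoc', ← add_div,
        show a * fx + b * fy = L by rw [hL]; simp [smul_eq_mul]]
      exact div_self hL0.ne'
    have hsum : a • (x + vx) + b • (y + vy) = z := by
      simp only [vx, vy, smul_add, smul_smul]
      rw [show a • x + (a * (fx / L)) • v + (b • y + (b * (fy / L)) • v)
            = (a • x + b • y) + ((a * (fx / L)) • v + (b * (fy / L)) • v) by abel,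
        ← add_smul, h1, one_smul, hv]
      abel
    rw [← hsum]
    exact hconv hxK hyK ha hb hab
  exact hz hzK
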